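/- arXiv:1904.12951 — 4 statements merged into one kernel-verified Lean document; each statement's English description precedes it below -/
import Mathlib

section
/- Let φ : G₀ → G₁ be a homomorphism of topological groups which is also a Serre fibration, let pᵢ : Eᵢ → Eᵢ/Gᵢ be principal Gᵢ-bundles, and let ψ : E₀ → E₁ be a φ-equivariant Serre fibration. Then the induced map ψ' : E₀/G₀ → E₁/G₁ is a Serre fibration. -/
open unitInterval

/-- A map is a Serre fibration if it has the homotopy lifting property
with respect to all cubes. -/
def IsSerreFibration {X Y : Type*} [TopologicalSpace X] [TopologicalSpace Y]
    (f : X → Y) : Prop :=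
  ∀ (n : ℕ) (H : C((Fin n → I) × I, Y)) (h₀ : C(Fin n → I, X)),
    (∀ v, f (h₀ v) = H (v, 0)) →
    ∃ H' : C((Fin n → I) × I, X),
      (∀ v, H' (v, 0) = h₀ v) ∧ ∀ z, f (H' z) = H z

/-- `E` is a (locally trivial) principal `G`-bundle over its orbit space: the quotient map
`E → E/G` admits local trivialisations, equivariant for the `G`-action. -/
def IsPrincipalGBundle (G E : Type*) [Group G] [TopologicalSpace G] [TopologicalSpace E]
    [MulAction G E] : Prop :=
  ∀ b : Quotient (MulAction.orbitRel G E),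
    ∃ U : Set (Quotient (MulAction.orbitRel G E)), IsOpen U ∧ b ∈ U ∧
      ∃ h : (Quotient.mk (MulAction.orbitRel G E) ⁻¹' U) ≃ₜ (U × G),
        (∀ x : Quotient.mk (MulAction.orbitRel G E) ⁻¹' U,
            ((h x).1 : Quotient (MulAction.orbitRel G E)) =
              Quotient.mk (MulAction.orbitRel G E) (x : E)) ∧
        ∀ (g : G) (x : Quotient.mk (MulAction.orbitRel G E) ⁻¹' U)
          (hgx : g • (x : E) ∈ Quotient.mk (MulAction.orbitRel G E) ⁻¹' U),
          (h ⟨g • (x : E), hgx⟩).2 = g * (h x).2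

/-- The map `E₀/G₀ → E₁/G₁` induced by a `φ`-equivariant map `ψ : E₀ → E₁`. -/
def quotMap {G₀ G₁ E₀ E₁ : Type*} [Group G₀] [Group G₁]
    [MulAction G₀ E₀] [MulAction G₁ E₁] (φ : G₀ →* G₁) (ψ : E₀ → E₁)
    (hψ : ∀ (g : G₀) (x : E₀), ψ (g • x) = φ g • ψ x) :
    Quotient (MulAction.orbitRel G₀ E₀) → Quotient (MulAction.orbitRel G₁ E₁) :=
  Quotient.map ψ (by
    intro x y h
    obtain ⟨g, hg⟩ := h
    exact ⟨φ g, by show φ g • ψ y = ψ x; rw [← hψ]; exact congrArg ψ hg⟩)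

namespace SerreAux
open unitInterval Set

/-- Pasting lemma for two closed sets. -/
lemma glue_continuousOn {α β : Type*} [TopologicalSpace α] [TopologicalSpace β]
    {s t : Set α} [DecidablePred (· ∈ s)] (hs : IsClosed s) (ht : IsClosed t) {f g : α → β}
    (hf : ContinuousOn f s) (hg : ContinuousOn g t) (hfg : Set.EqOn f g (s ∩ t)) :
    ContinuousOn (fun z => if z ∈ s then f z else g z) (s ∪ t) := by
  intro x hx
  set F := fun z => if z ∈ s then f z else g z with hF
  have hFf : Set.EqOn F f s := fun z hz => if_pos hz
  have hFg : Set.EqOn F g t := by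
    intro z hz; by_cases h : z ∈ s
    · simpa [hF, h] using hfg ⟨h, hz⟩
    · simp [hF, h]
  apply ContinuousWithinAt.union
  · by_cases h : x ∈ s
    · exact ((hf x h).congr hFf (hFf h))
    · exact continuousWithinAt_of_notMem_closure (by rwa [hs.closure_eq])
  · by_cases h : x ∈ t
    · exact ((hg x h).congr hFg (hFg h))
    · exact continuousWithinAt_of_notMem_closure (by rwa [ht.closure_eq])

/-- continuity of a fold of max. -/
lemma continuous_fold_max {α ι : Type*} [TopologicalSpace α] [DecidableEq ι]
    (s : Finset ι) (b : α → ℝ) (f : ι → α → ℝ) (hb : Continuous b)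
    (hf : ∀ i, Continuous (f i)) :
    Continuous (fun z => s.fold max (b z) (fun i => f i z)) := by
  classical
  induction s using Finset.induction with
  | empty => simpa using hb
  | insert _ _ hni ih =>
      simp only [Finset.fold_insert hni]
      exact Continuous.max (by exact hf _) ih

lemma fold_max_attained {ι : Type*} [DecidableEq ι]
    (s : Finset ι) (b : ℝ) (f : ι → ℝ) :
    s.fold max b f = b ∨ ∃ i ∈ s, s.fold max b f = f i := by
  classical
  induction s using Finset.induction with
  | empty => simp
  | @insert a s hni ih =>
      simp only [Finset.fold_insert hni]
      rcases max_choice (f a) (s.fold max b f) with h | h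
      · right; exact ⟨a, by simp, h⟩
      · rw [h]
        rcases ih with h' | ⟨i, hi, h'⟩
        · left; exact h'
        · right; exact ⟨i, by simp [hi], h'⟩

lemma le_fold_max_base {ι : Type*} [DecidableEq ι]
    (s : Finset ι) (b : ℝ) (f : ι → ℝ) :
    b ≤ s.fold max b f :=
  (Finset.le_fold_max _).2 (Or.inl le_rfl)

lemma le_fold_max_mem {ι : Type*} [DecidableEq ι]
    (s : Finset ι) (b : ℝ) (f : ι → ℝ) {i : ι} (hi : i ∈ s) :
    f i ≤ s.fold max b f :=
  (Finset.le_fold_max _).2 (Or.inr ⟨i, hi, le_rfl⟩)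

lemma fold_max_le' {ι : Type*} [DecidableEq ι]
    (s : Finset ι) (b : ℝ) (f : ι → ℝ) {c : ℝ}
    (hb : b ≤ c) (hf : ∀ i ∈ s, f i ≤ c) :
    s.fold max b f ≤ c :=
  (Finset.fold_max_le _).2 ⟨hb, hf⟩

end SerreAux

namespace SerreAux
open unitInterval Set

variable {n : ℕ}

/-- grid point `m / N`. -/
noncomputable def gr (N m : ℕ) : ℝ := (m : ℝ) / (N : ℝ)

lemma gr_nonneg {N m : ℕ} : 0 ≤ gr N m := by
  unfold gr; positivity

lemma gr_mono {N : ℕ} {a b : ℕ} (h : a ≤ b) : gr N a ≤ gr N b := by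
  unfold gr
  gcongr

lemma gr_add_two {N m : ℕ} (hN : 0 < N) : gr N (m + 2) = gr N m + 2 / N := by
  unfold gr; push_cast; field_simp

lemma gr_add_one {N m : ℕ} (hN : 0 < N) : gr N (m + 1) = gr N m + 1 / N := by
  unfold gr; push_cast; field_simp

lemma gr_strictMono {N : ℕ} (hN : 0 < N) {a b : ℕ} (h : a < b) : gr N a < gr N b := by
  unfold gr
  have hN' : (0:ℝ) < N := by exact_mod_cast hN
  exact (div_lt_div_iff_of_pos_right hN').2 (by exact_mod_cast h)

lemma gr_self {N : ℕ} (hN : 0 < N) : gr N N = 1 := by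
  unfold gr
  have : (N:ℝ) ≠ 0 := by exact_mod_cast hN.ne'
  exact div_self this

/-- The box: coordinates outside `Fr` are constrained in a grid cell, time in a slab. -/
def Box (N : ℕ) (k : Fin n → ℕ) (Fr : Finset (Fin n)) (j : ℕ) : Set ((Fin n → I) × I) :=
  {z | (∀ i, i ∉ Fr → (gr N (k i) ≤ (z.1 i : ℝ) ∧ (z.1 i : ℝ) ≤ gr N (k i + 1))) ∧
    gr N j ≤ (z.2 : ℝ) ∧ (z.2 : ℝ) ≤ gr N (j + 1)}

/-- The initial part of the boundary of the box: the bottom together with the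
low faces in constrained coordinates with positive grid index. -/
def Dom (N : ℕ) (k : Fin n → ℕ) (Fr : Finset (Fin n)) (j : ℕ) : Set ((Fin n → I) × I) :=
  {z | z ∈ Box N k Fr j ∧ ((z.2 : ℝ) = gr N j ∨
    ∃ i, i ∉ Fr ∧ 0 < k i ∧ (z.1 i : ℝ) = gr N (k i))}

lemma Dom_subset {N k Fr j} : Dom (n := n) N k Fr j ⊆ Box N k Fr j := fun _ hz => hz.1

lemma cont_coord (i : Fin n) : Continuous (fun z : (Fin n → I) × I => (z.1 i : ℝ)) :=
  continuous_subtype_val.comp ((continuous_apply i).comp continuous_fst)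

lemma cont_time : Continuous (fun z : (Fin n → I) × I => (z.2 : ℝ)) :=
  continuous_subtype_val.comp continuous_snd

lemma isClosed_box (N : ℕ) (k : Fin n → ℕ) (Fr : Finset (Fin n)) (j : ℕ) :
    IsClosed (Box N k Fr j) := by
  have hrw : Box N k Fr j =
      (⋂ i : Fin n, {z : (Fin n → I) × I |
        i ∉ Fr → (gr N (k i) ≤ (z.1 i : ℝ) ∧ (z.1 i : ℝ) ≤ gr N (k i + 1))}) ∩
      ({z : (Fin n → I) × I | gr N j ≤ (z.2 : ℝ)} ∩ {z | (z.2 : ℝ) ≤ gr N (j + 1)}) := by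
    ext z
    simp only [Box, Set.mem_setOf_eq, Set.mem_inter_iff, Set.mem_iInter]
  rw [hrw]
  refine IsClosed.inter (isClosed_iInter fun i => ?_)
    ((isClosed_le continuous_const cont_time).inter (isClosed_le cont_time continuous_const))
  by_cases hi : i ∈ Fr
  · have : {z : (Fin n → I) × I |
        i ∉ Fr → (gr N (k i) ≤ (z.1 i : ℝ) ∧ (z.1 i : ℝ) ≤ gr N (k i + 1))} = Set.univ := by
      ext z; simp [hi]
    rw [this]; exact isClosed_univ
  · have : {z : (Fin n → I) × I |
        i ∉ Fr → (gr N (k i) ≤ (z.1 i : ℝ) ∧ (z.1 i : ℝ) ≤ gr N (k i + 1))} =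
        {z : (Fin n → I) × I | gr N (k i) ≤ (z.1 i : ℝ)} ∩
          {z | (z.1 i : ℝ) ≤ gr N (k i + 1)} := by
      ext z; simp [hi]
    rw [this]
    exact (isClosed_le continuous_const (cont_coord i)).inter
      (isClosed_le (cont_coord i) continuous_const)

lemma isClosed_dom (N : ℕ) (k : Fin n → ℕ) (Fr : Finset (Fin n)) (j : ℕ) :
    IsClosed (Dom N k Fr j) := by
  have hrw : Dom N k Fr j = Box N k Fr j ∩
      ({z : (Fin n → I) × I | (z.2 : ℝ) = gr N j} ∪
        ⋃ i : Fin n, {z : (Fin n → I) × I |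
          (i ∉ Fr ∧ 0 < k i) ∧ (z.1 i : ℝ) = gr N (k i)}) := by
    ext z
    simp only [Dom, Set.mem_setOf_eq, Set.mem_inter_iff, Set.mem_union, Set.mem_iUnion]
    tauto
  rw [hrw]
  refine (isClosed_box N k Fr j).inter (IsClosed.union (isClosed_eq cont_time continuous_const)
    (isClosed_iUnion_of_finite fun i => ?_))
  by_cases hc : i ∉ Fr ∧ 0 < k i
  · have : {z : (Fin n → I) × I | (i ∉ Fr ∧ 0 < k i) ∧ (z.1 i : ℝ) = gr N (k i)} =
        {z : (Fin n → I) × I | (z.1 i : ℝ) = gr N (k i)} := by ext z; simp [hc]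
    rw [this]; exact isClosed_eq (cont_coord i) continuous_const
  · have : {z : (Fin n → I) × I | (i ∉ Fr ∧ 0 < k i) ∧ (z.1 i : ℝ) = gr N (k i)} = ∅ := by
      ext z; simp only [Set.mem_setOf_eq, Set.mem_empty_iff_false, iff_false]
      exact fun h => hc h.1
    rw [this]; exact isClosed_empty

lemma exists_grid {N : ℕ} (hN : 0 < N) (x : I) :
    ∃ l, l < N ∧ gr N l ≤ (x : ℝ) ∧ (x : ℝ) ≤ gr N (l + 1) := by
  have hN' : (0:ℝ) < N := by exact_mod_cast hN
  have hx0 : (0:ℝ) ≤ (x : ℝ) * N := mul_nonneg x.2.1 (le_of_lt hN')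
  set l₀ := Nat.floor ((x : ℝ) * N) with hl₀
  by_cases h : l₀ < N
  · refine ⟨l₀, h, ?_, ?_⟩
    · rw [gr, div_le_iff₀ hN']
      exact Nat.floor_le hx0
    · rw [gr, le_div_iff₀ hN']
      have := Nat.lt_floor_add_one ((x : ℝ) * N)
      push_cast
      linarith [this]
  · have hxN : (N : ℝ) ≤ (x : ℝ) * N := by
      have : N ≤ l₀ := le_of_not_gt h
      have := (Nat.le_floor_iff hx0).1 this
      exact_mod_cast this
    have hx1 : (1:ℝ) ≤ (x:ℝ) := by
      nlinarith
    have hx1' : (x:ℝ) = 1 := le_antisymm x.2.2 hx1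
    refine ⟨N - 1, Nat.sub_lt hN one_pos, ?_, ?_⟩
    · calc gr N (N - 1) ≤ gr N N := gr_mono (Nat.sub_le N 1)
        _ = 1 := gr_self hN
        _ = (x:ℝ) := hx1'.symm
    · have hc : N - 1 + 1 = N := Nat.sub_add_cancel hN
      rw [hc, gr_self hN, hx1']

end SerreAux

namespace SerreAux
open unitInterval Set

variable {n : ℕ}

noncomputable def ut (N j : ℕ) (z : (Fin n → I) × I) : ℝ :=
  (gr N (j + 2) - (z.2 : ℝ)) * N / 2

noncomputable def cand (N : ℕ) (k : Fin n → ℕ) (i : Fin n) (z : (Fin n → I) × I) : ℝ :=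
  (gr N (k i + 2) - (z.1 i : ℝ)) * N / 2

noncomputable def uu (N : ℕ) (k : Fin n → ℕ) (j : ℕ) (z : (Fin n → I) × I) : ℝ :=
  max (1 / 2) (Finset.univ.fold max (ut N j z)
    (fun i => if 0 < k i then cand N k i z else ut N j z))

noncomputable def retr (N : ℕ) (k : Fin n → ℕ) (j : ℕ) (z : (Fin n → I) × I) :
    (Fin n → I) × I :=
  (fun i => if 0 < k i then
      Set.projIcc (0:ℝ) 1 zero_le_one
        (gr N (k i + 2) + ((z.1 i : ℝ) - gr N (k i + 2)) / uu N k j z)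
    else z.1 i,
   Set.projIcc (0:ℝ) 1 zero_le_one
     (gr N (j + 2) + ((z.2 : ℝ) - gr N (j + 2)) / uu N k j z))

lemma uu_pos (N : ℕ) (k : Fin n → ℕ) (j : ℕ) (z : (Fin n → I) × I) :
    (0:ℝ) < uu N k j z :=
  lt_of_lt_of_le (by norm_num) (le_max_left _ _)

lemma continuous_ut (N j : ℕ) : Continuous (ut (n := n) N j) := by
  unfold ut
  exact (((continuous_const.sub cont_time).mul continuous_const).div_const _)

lemma continuous_cand (N : ℕ) (k : Fin n → ℕ) (i : Fin n) : Continuous (cand N k i) := by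
  unfold cand
  exact (((continuous_const.sub (cont_coord i)).mul continuous_const).div_const _)

lemma continuous_uu (N : ℕ) (k : Fin n → ℕ) (j : ℕ) : Continuous (uu N k j) := by
  unfold uu
  refine continuous_const.max ?_
  refine continuous_fold_max _ _ _ (continuous_ut N j) (fun i => ?_)
  by_cases h : 0 < k i <;> simp [h, continuous_cand, continuous_ut]

lemma continuous_retr (N : ℕ) (k : Fin n → ℕ) (j : ℕ) : Continuous (retr (n := n) N k j) := by
  unfold retr
  have huu := continuous_uu N k j
  have hne : ∀ z, uu N k j z ≠ 0 := fun z => (uu_pos N k j z).ne'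
  refine Continuous.prodMk ?_ ?_
  · refine continuous_pi fun i => ?_
    by_cases h : 0 < k i
    · simp only [h, if_true]
      exact continuous_projIcc.comp
        (continuous_const.add (((cont_coord i).sub continuous_const).div huu hne))
    · simp only [h, if_false]
      exact (continuous_apply i).comp continuous_fst
  · exact continuous_projIcc.comp
      (continuous_const.add ((cont_time.sub continuous_const).div huu hne))

section spec
variable {N : ℕ} {n : ℕ}

lemma ut_mem (hN : 0 < N) (k : Fin n → ℕ) (j : ℕ) {z : (Fin n → I) × I}
    (hz : z ∈ Box N k ∅ j) : 1/2 ≤ ut N j z ∧ ut N j z ≤ 1 := by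
  obtain ⟨-, h1, h2⟩ := hz
  have hN' : (0:ℝ) < N := by exact_mod_cast hN
  have hNne : (N:ℝ) ≠ 0 := hN'.ne'
  have e2 : gr N (j + 2) = gr N j + 2 / N := gr_add_two hN
  have e1 : gr N (j + 1) = gr N j + 1 / N := gr_add_one hN
  have hsplit : (2:ℝ)/N = 1/N + 1/N := by ring
  have hXl : 1/(N:ℝ) ≤ gr N (j+2) - (z.2:ℝ) := by rw [e2] at *; rw [e1] at h2; linarith
  have hXu : gr N (j+2) - (z.2:ℝ) ≤ 2/(N:ℝ) := by rw [e2] at *; linarith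
  unfold ut
  constructor
  · have l1 : (1/(N:ℝ)) * N / 2 = 1/2 := by field_simp
    calc (1:ℝ)/2 = (1/(N:ℝ)) * N / 2 := l1.symm
      _ ≤ (gr N (j + 2) - (z.2:ℝ)) * N / 2 := by gcongr
  · have l2 : (2/(N:ℝ)) * N / 2 = 1 := by field_simp
    calc (gr N (j + 2) - (z.2:ℝ)) * N / 2 ≤ (2/(N:ℝ)) * N / 2 := by gcongr
      _ = 1 := l2

lemma cand_mem (hN : 0 < N) (k : Fin n → ℕ) (j : ℕ) (i : Fin n) {z : (Fin n → I) × I}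
    (hz : z ∈ Box N k ∅ j) : 1/2 ≤ cand N k i z ∧ cand N k i z ≤ 1 := by
  obtain ⟨hx, -, -⟩ := hz
  obtain ⟨h1, h2⟩ := hx i (by simp)
  have hN' : (0:ℝ) < N := by exact_mod_cast hN
  have hNne : (N:ℝ) ≠ 0 := hN'.ne'
  have e2 : gr N (k i + 2) = gr N (k i) + 2 / N := gr_add_two hN
  have e1 : gr N (k i + 1) = gr N (k i) + 1 / N := gr_add_one hN
  have hsplit : (2:ℝ)/N = 1/N + 1/N := by ring
  have hXl : 1/(N:ℝ) ≤ gr N (k i+2) - (z.1 i:ℝ) := by rw [e2] at *; rw [e1] at h2; linarith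
  have hXu : gr N (k i+2) - (z.1 i:ℝ) ≤ 2/(N:ℝ) := by rw [e2] at *; linarith
  unfold cand
  constructor
  · have l1 : (1/(N:ℝ)) * N / 2 = 1/2 := by field_simp
    calc (1:ℝ)/2 = (1/(N:ℝ)) * N / 2 := l1.symm
      _ ≤ (gr N (k i + 2) - (z.1 i:ℝ)) * N / 2 := by gcongr
  · have l2 : (2/(N:ℝ)) * N / 2 = 1 := by field_simp
    calc (gr N (k i + 2) - (z.1 i:ℝ)) * N / 2 ≤ (2/(N:ℝ)) * N / 2 := by gcongr
      _ = 1 := l2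

lemma uu_le_one (hN : 0 < N) {k : Fin n → ℕ} {j : ℕ} {z : (Fin n → I) × I}
    (hz : z ∈ Box N k ∅ j) : uu N k j z ≤ 1 := by
  unfold uu
  refine max_le (by norm_num) (fold_max_le' _ _ _ ((ut_mem hN k j hz).2) (fun i _ => ?_))
  by_cases h : 0 < k i
  · rw [if_pos h]; exact (cand_mem hN k j i hz).2
  · rw [if_neg h]; exact (ut_mem hN k j hz).2

lemma ut_le_uu {k : Fin n → ℕ} {j : ℕ} (z : (Fin n → I) × I) :
    ut N j z ≤ uu N k j z :=
  le_trans (le_fold_max_base _ _ _) (le_max_right _ _)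

lemma cand_le_uu {k : Fin n → ℕ} {j : ℕ} {i : Fin n} (hki : 0 < k i)
    (z : (Fin n → I) × I) : cand N k i z ≤ uu N k j z := by
  refine le_trans ?_ (le_max_right _ _)
  have := le_fold_max_mem (Finset.univ) (ut N j z)
    (fun i => if 0 < k i then cand N k i z else ut N j z) (Finset.mem_univ i)
  simpa [hki] using this

lemma uu_attained (hN : 0 < N) {k : Fin n → ℕ} {j : ℕ} {z : (Fin n → I) × I}
    (hz : z ∈ Box N k ∅ j) :
    uu N k j z = ut N j z ∨ ∃ i, 0 < k i ∧ uu N k j z = cand N k i z := by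
  have h12 : 1/2 ≤ ut N j z := (ut_mem hN k j hz).1
  have hfold : uu N k j z = Finset.univ.fold max (ut N j z)
      (fun i => if 0 < k i then cand N k i z else ut N j z) := by
    unfold uu
    exact max_eq_right (le_trans h12 (le_fold_max_base _ _ _))
  rcases fold_max_attained (Finset.univ) (ut N j z)
      (fun i => if 0 < k i then cand N k i z else ut N j z) with h | ⟨i, -, h⟩
  · left; rw [hfold, h]
  · by_cases hki : 0 < k i
    · right; exact ⟨i, hki, by rw [hfold, h, if_pos hki]⟩
    · left; rw [hfold, h, if_neg hki]

end spec

end SerreAux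

namespace SerreAux
open unitInterval Set

variable {n N : ℕ}

lemma proj_coe {x : ℝ} (h0 : 0 ≤ x) (h1 : x ≤ 1) :
    ((Set.projIcc (0:ℝ) 1 zero_le_one x : I) : ℝ) = x := by
  rw [Set.projIcc_of_mem _ ⟨h0, h1⟩]

lemma aux_bounds {u a x : ℝ} (hN' : 0 < (N:ℝ)) (hu0 : 0 < u) (hu1 : u ≤ 1)
    (hcand : (a - x) * N / 2 ≤ u) (hax : 1/(N:ℝ) ≤ a - x) :
    a - 2/(N:ℝ) ≤ a + (x - a)/u ∧ a + (x - a)/u ≤ x := by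
  have hneg : (x - a)/u = -((a - x)/u) := by ring
  have key1 : (a - x)/u ≤ 2/N := by rw [div_le_div_iff₀ hu0 hN']; nlinarith
  have haxnn : (0:ℝ) ≤ a - x := le_trans (by positivity : (0:ℝ) ≤ 1/(N:ℝ)) hax
  have key2 : (a - x) ≤ (a - x)/u := by
    rw [le_div_iff₀ hu0]
    have := mul_le_mul_of_nonneg_left hu1 haxnn
    linarith
  constructor <;> · rw [hneg]; linarith

/-- basic bounds for the pre-projection time coordinate of the retraction. -/
lemma retr_time_bounds (hN : 0 < N) {k : Fin n → ℕ} {j : ℕ} {z : (Fin n → I) × I}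
    (hz : z ∈ Box N k ∅ j) :
    gr N j ≤ gr N (j + 2) + ((z.2 : ℝ) - gr N (j + 2)) / uu N k j z ∧
      gr N (j + 2) + ((z.2 : ℝ) - gr N (j + 2)) / uu N k j z ≤ (z.2 : ℝ) := by
  have hN' : (0:ℝ) < N := by exact_mod_cast hN
  have e2 : gr N (j + 2) = gr N j + 2 / N := gr_add_two hN
  have e1 : gr N (j + 1) = gr N j + 1 / N := gr_add_one hN
  have hax : 1/(N:ℝ) ≤ gr N (j + 2) - (z.2:ℝ) := by
    have h2 := hz.2.2
    rw [e1] at h2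
    rw [e2]
    have hsplit : (2:ℝ)/N = 1/N + 1/N := by ring
    linarith
  have h := aux_bounds hN' (uu_pos N k j z) (uu_le_one hN hz) (ut_le_uu z) hax
  refine ⟨?_, h.2⟩
  have : gr N (j + 2) - 2/(N:ℝ) = gr N j := by rw [e2]; ring
  linarith [h.1]

lemma retr_coord_bounds (hN : 0 < N) {k : Fin n → ℕ} {j : ℕ} {i : Fin n} (hki : 0 < k i)
    {z : (Fin n → I) × I} (hz : z ∈ Box N k ∅ j) :
    gr N (k i) ≤ gr N (k i + 2) + ((z.1 i : ℝ) - gr N (k i + 2)) / uu N k j z ∧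
      gr N (k i + 2) + ((z.1 i : ℝ) - gr N (k i + 2)) / uu N k j z ≤ (z.1 i : ℝ) := by
  have hN' : (0:ℝ) < N := by exact_mod_cast hN
  have e2 : gr N (k i + 2) = gr N (k i) + 2 / N := gr_add_two hN
  have e1 : gr N (k i + 1) = gr N (k i) + 1 / N := gr_add_one hN
  have hax : 1/(N:ℝ) ≤ gr N (k i + 2) - (z.1 i:ℝ) := by
    have h2 := (hz.1 i (by simp)).2
    rw [e1] at h2
    rw [e2]
    have hsplit : (2:ℝ)/N = 1/N + 1/N := by ring
    linarith
  have h := aux_bounds hN' (uu_pos N k j z) (uu_le_one hN hz) (cand_le_uu hki z) hax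
  refine ⟨?_, h.2⟩
  have : gr N (k i + 2) - 2/(N:ℝ) = gr N (k i) := by rw [e2]; ring
  linarith [h.1]

/-- coercion formulas for the retraction applied to a point of the box. -/
lemma retr_coe (hN : 0 < N) {k : Fin n → ℕ} {j : ℕ} {z : (Fin n → I) × I}
    (hz : z ∈ Box N k ∅ j) :
    ((retr N k j z).2 : ℝ) = gr N (j + 2) + ((z.2 : ℝ) - gr N (j + 2)) / uu N k j z ∧
    (∀ i, 0 < k i → ((retr N k j z).1 i : ℝ) =
      gr N (k i + 2) + ((z.1 i : ℝ) - gr N (k i + 2)) / uu N k j z) ∧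
    (∀ i, ¬ 0 < k i → (retr N k j z).1 i = z.1 i) := by
  obtain ⟨ht1, ht2⟩ := retr_time_bounds hN hz
  refine ⟨?_, fun i hki => ?_, fun i hki => ?_⟩
  · exact proj_coe (le_trans gr_nonneg ht1) (le_trans ht2 z.2.2.2)
  · obtain ⟨hc1, hc2⟩ := retr_coord_bounds hN hki hz
    simp only [retr, if_pos hki]
    exact proj_coe (le_trans gr_nonneg hc1) (le_trans hc2 (z.1 i).2.2)
  · simp only [retr, if_neg hki]

lemma retr_mapsTo (hN : 0 < N) {k : Fin n → ℕ} {j : ℕ} :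
    MapsTo (retr N k j) (Box N k ∅ j) (Dom N k ∅ j) := by
  intro z hz
  obtain ⟨hct, hcc, hcn⟩ := retr_coe hN hz
  obtain ⟨ht1, ht2⟩ := retr_time_bounds hN hz
  have hbox : retr N k j z ∈ Box N k ∅ j := by
    refine ⟨fun i _ => ?_, ?_, ?_⟩
    · by_cases hki : 0 < k i
      · obtain ⟨hc1, hc2⟩ := retr_coord_bounds hN hki hz
        rw [hcc i hki]
        exact ⟨hc1, le_trans hc2 (hz.1 i (by simp)).2⟩
      · rw [hcn i hki]; exact hz.1 i (by simp)
    · rw [hct]; exact ht1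
    · rw [hct]; exact le_trans ht2 hz.2.2
  refine ⟨hbox, ?_⟩
  have hN' : (0:ℝ) < N := by exact_mod_cast hN
  rcases uu_attained hN hz with h | ⟨i, hki, h⟩
  · left
    rw [hct, h]
    have hd : (0:ℝ) < gr N (j + 2) - (z.2:ℝ) := by
      have e2 : gr N (j + 2) = gr N j + 2 / N := gr_add_two hN
      have e1 : gr N (j + 1) = gr N j + 1 / N := gr_add_one hN
      have h2 := hz.2.2; rw [e1] at h2
      rw [e2]
      have h1N : (0:ℝ) < 1/N := by positivity
      have hsplit : (2:ℝ)/N = 1/N + 1/N := by ring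
      linarith
    have hutdef : ut N j z = (gr N (j + 2) - (z.2:ℝ)) * N / 2 := rfl
    have hne : (gr N (j + 2) - (z.2:ℝ)) * N / 2 ≠ 0 := by positivity
    have hdiv : ((z.2:ℝ) - gr N (j + 2)) / ((gr N (j + 2) - (z.2:ℝ)) * N / 2)
        = -(2/(N:ℝ)) := by
      rw [div_eq_iff hne]
      field_simp
      ring
    rw [hutdef, hdiv, gr_add_two hN]
    ring
  · right
    refine ⟨i, by simp, hki, ?_⟩
    rw [hcc i hki, h]
    have hd : (0:ℝ) < gr N (k i + 2) - (z.1 i:ℝ) := by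
      have e2 : gr N (k i + 2) = gr N (k i) + 2 / N := gr_add_two hN
      have e1 : gr N (k i + 1) = gr N (k i) + 1 / N := gr_add_one hN
      have h2 := (hz.1 i (by simp)).2; rw [e1] at h2
      rw [e2]
      have h1N : (0:ℝ) < 1/N := by positivity
      have hsplit : (2:ℝ)/N = 1/N + 1/N := by ring
      linarith
    have hcdef : cand N k i z = (gr N (k i + 2) - (z.1 i:ℝ)) * N / 2 := rfl
    have hne : (gr N (k i + 2) - (z.1 i:ℝ)) * N / 2 ≠ 0 := by positivity
    have hdiv : ((z.1 i:ℝ) - gr N (k i + 2)) / ((gr N (k i + 2) - (z.1 i:ℝ)) * N / 2)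
        = -(2/(N:ℝ)) := by
      rw [div_eq_iff hne]
      field_simp
      ring
    rw [hcdef, hdiv, gr_add_two hN]
    ring

lemma retr_eqOn (hN : 0 < N) {k : Fin n → ℕ} {j : ℕ} :
    EqOn (retr N k j) id (Dom N k ∅ j) := by
  intro z hz
  have hN' : (0:ℝ) < N := by exact_mod_cast hN
  obtain ⟨hbox, hcase⟩ := hz
  have hu1 : uu N k j z ≤ 1 := uu_le_one hN hbox
  have hueq : uu N k j z = 1 := by
    rcases hcase with h | ⟨i, -, hki, h⟩
    · have : ut N j z = 1 := by
        have hutdef : ut N j z = (gr N (j + 2) - (z.2:ℝ)) * N / 2 := rfl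
        rw [hutdef, h, gr_add_two hN]
        field_simp
        ring
      exact le_antisymm hu1 (this ▸ ut_le_uu z)
    · have : cand N k i z = 1 := by
        have hcdef : cand N k i z = (gr N (k i + 2) - (z.1 i:ℝ)) * N / 2 := rfl
        rw [hcdef, h, gr_add_two hN]
        field_simp
        ring
      exact le_antisymm hu1 (this ▸ cand_le_uu hki z)
  obtain ⟨hct, hcc, hcn⟩ := retr_coe hN hbox
  have h2 : (retr N k j z).2 = z.2 := by
    apply Subtype.ext
    rw [hct, hueq]
    simp
  have h1 : (retr N k j z).1 = z.1 := by
    funext i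
    by_cases hki : 0 < k i
    · apply Subtype.ext
      rw [hcc i hki, hueq]
      simp
    · exact hcn i hki
  show retr N k j z = z
  exact Prod.ext h1 h2

end SerreAux

namespace SerreAux
open unitInterval Set

open Classical in
lemma cell_lift {E B F : Type*} [TopologicalSpace E] [TopologicalSpace B] [TopologicalSpace F]
    (p : E → B) {n N : ℕ} (hN : 0 < N) (H : (Fin n → I) × I → B) (hH : Continuous H)
    (k : Fin n → ℕ) (j : ℕ) (U : Set B) (h : (p ⁻¹' U) ≃ₜ U × F)
    (hh : ∀ x : p ⁻¹' U, ((h x).1 : B) = p (x : E))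
    (hBU : MapsTo H (Box N k ∅ j) U)
    (g : (Fin n → I) × I → E) (hg : ContinuousOn g (Dom N k ∅ j))
    (hgp : ∀ z ∈ Dom N k ∅ j, p (g z) = H z) :
    ∃ g' : (Fin n → I) × I → E, ContinuousOn g' (Box N k ∅ j) ∧
      (∀ z ∈ Box N k ∅ j, p (g' z) = H z) ∧ EqOn g' g (Dom N k ∅ j) := by
  have hmem : ∀ z ∈ Box N k ∅ j, g (retr N k j z) ∈ p ⁻¹' U := by
    intro z hz
    have hd := retr_mapsTo hN hz
    show p (g (retr N k j z)) ∈ U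
    rw [hgp _ hd]
    exact hBU (Dom_subset hd)
  have key : ∀ w : ↑U × F, p ((h.symm w : p ⁻¹' U) : E) = ((w.1 : B)) := by
    intro w
    have := hh (h.symm w)
    rw [h.apply_symm_apply] at this
    exact this.symm
  refine ⟨fun z => if hz : z ∈ Box N k ∅ j then
      ((h.symm (⟨H z, hBU hz⟩, (h ⟨g (retr N k j z), hmem z hz⟩).2) : p ⁻¹' U) : E)
    else g z, ?_, ?_, ?_⟩
  · rw [continuousOn_iff_continuous_restrict]
    have hrw : (Box N k ∅ j).domRestrict (fun z => if hz : z ∈ Box N k ∅ j then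
        ((h.symm (⟨H z, hBU hz⟩, (h ⟨g (retr N k j z), hmem z hz⟩).2) : p ⁻¹' U) : E)
      else g z) = fun z : Box N k ∅ j =>
        ((h.symm (⟨H z, hBU z.2⟩,
          (h ⟨g (retr N k j (z : (Fin n → I) × I)), hmem _ z.2⟩).2) : p ⁻¹' U) : E) := by
      funext z
      simp only [Set.domRestrict_apply]
      rw [dif_pos z.2]
    rw [hrw]
    have hgr : Continuous (fun z : (Box N k ∅ j) =>
        g (retr N k j (z : (Fin n → I) × I))) :=
      hg.comp_continuous ((continuous_retr N k j).comp continuous_subtype_val)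
        (fun z => retr_mapsTo hN z.2)
    exact continuous_subtype_val.comp (h.symm.continuous.comp
      ((Continuous.subtype_mk (hH.comp continuous_subtype_val) _).prodMk
        (continuous_snd.comp (h.continuous.comp (Continuous.subtype_mk hgr _)))))
  · intro z hz
    simp only [dif_pos hz]
    exact key _
  · intro z hz
    have hzB := Dom_subset hz
    have hr : retr N k j z = z := retr_eqOn hN hz
    simp only [dif_pos hzB]
    have e2 : (⟨H z, hBU hzB⟩, (h ⟨g (retr N k j z), hmem z hzB⟩).2) =
        h ⟨g (retr N k j z), hmem z hzB⟩ := by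
      refine Prod.ext ?_ rfl
      apply Subtype.ext
      show (H z : B) = ((h ⟨g (retr N k j z), hmem z hzB⟩).1 : B)
      rw [hh]
      show H z = p (g (retr N k j z))
      rw [hr]
      exact (hgp z hz).symm
    rw [e2, h.symm_apply_apply]
    show g (retr N k j z) = g z
    rw [hr]

end SerreAux

namespace SerreAux
open unitInterval Set

open Classical in
lemma box_lift {E B F : Type*} [TopologicalSpace E] [TopologicalSpace B] [TopologicalSpace F]
    (p : E → B) {n N : ℕ} (hN : 0 < N) (H : (Fin n → I) × I → B) (hH : Continuous H)
    (hloc : ∀ (k : Fin n → ℕ) (j : ℕ), (∀ i, k i < N) → (Box N k ∅ j).Nonempty →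
      ∃ U : Set B, (∃ h : (p ⁻¹' U) ≃ₜ ↑U × F, ∀ x : p ⁻¹' U, ((h x).1 : B) = p (x : E)) ∧
        MapsTo H (Box N k ∅ j) U)
    (Fr : Finset (Fin n)) :
    ∀ (k : Fin n → ℕ), (∀ i, i ∉ Fr → k i < N) → ∀ (j : ℕ)
      (g : (Fin n → I) × I → E), ContinuousOn g (Dom N k Fr j) →
      (∀ z ∈ Dom N k Fr j, p (g z) = H z) →
      ∃ g', ContinuousOn g' (Box N k Fr j) ∧ (∀ z ∈ Box N k Fr j, p (g' z) = H z) ∧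
        EqOn g' g (Dom N k Fr j) := by
  induction Fr using Finset.induction with
  | empty =>
    intro k hk j g hg hgp
    by_cases hne : (Box N k ∅ j).Nonempty
    · obtain ⟨U, ⟨h, hh⟩, hBU⟩ := hloc k j (fun i => hk i (by simp)) hne
      exact cell_lift p hN H hH k j U h hh hBU g hg hgp
    · refine ⟨g, ?_, ?_, fun z _ => rfl⟩
      · rw [Set.not_nonempty_iff_eq_empty] at hne; rw [hne]; exact continuousOn_empty g
      · intro z hz; exact absurd ⟨z, hz⟩ hne
  | @insert a Fr ha ih =>
    intro k hk j g hg hgp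
    set PD : ℕ → Set ((Fin n → I) × I) := fun m =>
      Dom N k (insert a Fr) j ∪ ⋃ l ∈ Finset.range m, Box N (Function.update k a l) Fr j
      with hPDdef
    have hPieceBox : ∀ m, Box N (Function.update k a m) Fr j ⊆ Box N k (insert a Fr) j := by
      intro m z hz
      obtain ⟨hx, ht⟩ := hz
      refine ⟨fun i hi => ?_, ht⟩
      have hia : i ≠ a := fun h => hi (by simp [h])
      have hiF : i ∉ Fr := fun h => hi (by simp [h])
      have := hx i hiF
      rwa [Function.update_of_ne hia] at this
    have hID1 : ∀ m, PD m ∩ Box N (Function.update k a m) Fr j =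
        Dom N (Function.update k a m) Fr j := by
      intro m
      ext z
      constructor
      · rintro ⟨hPD, hPm⟩
        refine ⟨hPm, ?_⟩
        rcases hPD with hD | hU
        · rcases hD.2 with hb | ⟨i, hi, hki, hxi⟩
          · left; exact hb
          · right
            have hia : i ≠ a := fun h => hi (by simp [h])
            have hiF : i ∉ Fr := fun h => hi (by simp [h])
            exact ⟨i, hiF, by rwa [Function.update_of_ne hia],
              by rwa [Function.update_of_ne hia]⟩
        · right
          simp only [Set.mem_iUnion, Finset.mem_range] at hU
          obtain ⟨l, hlm, hzl⟩ := hU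
          have h1 : (z.1 a : ℝ) ≤ gr N (l + 1) := by
            have := (hzl.1 a ha).2
            rwa [Function.update_self] at this
          have h2 : gr N m ≤ (z.1 a : ℝ) := by
            have := (hPm.1 a ha).1
            rwa [Function.update_self] at this
          have h3 : gr N (l + 1) ≤ gr N m := gr_mono (Nat.succ_le_of_lt hlm)
          have hxa : (z.1 a : ℝ) = gr N m := le_antisymm (le_trans h1 h3) h2
          refine ⟨a, ha, ?_, ?_⟩
          · rw [Function.update_self]; omega
          · rw [Function.update_self]; exact hxa
      · rintro ⟨hBox, hcase⟩
        refine ⟨?_, hBox⟩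
        rcases hcase with hb | ⟨i, hiF, hki, hxi⟩
        · left; exact ⟨hPieceBox m hBox, Or.inl hb⟩
        · by_cases hia : i = a
          · rw [hia, Function.update_self] at hki
            rw [hia, Function.update_self] at hxi
            right
            simp only [Set.mem_iUnion, Finset.mem_range, exists_prop]
            refine ⟨m - 1, Nat.sub_lt hki one_pos, ?_, hBox.2⟩
            intro i' hi'
            by_cases hi'a : i' = a
            · have hsac : m - 1 + 1 = m := by omega
              rw [hi'a, Function.update_self, hsac]
              exact ⟨by rw [hxi]; exact gr_mono (Nat.sub_le m 1), le_of_eq hxi⟩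
            · rw [Function.update_of_ne hi'a]
              have := hBox.1 i' hi'
              rwa [Function.update_of_ne hi'a] at this
          · left
            refine ⟨hPieceBox m hBox, Or.inr ⟨i, ?_, ?_, ?_⟩⟩
            · simp [hia, hiF]
            · rwa [Function.update_of_ne hia] at hki
            · rwa [Function.update_of_ne hia] at hxi
    have hID2 : Box N k (insert a Fr) j ⊆ PD N := by
      intro z hz
      obtain ⟨l, hlN, hl1, hl2⟩ := exists_grid hN (z.1 a)
      right
      simp only [Set.mem_iUnion, Finset.mem_range]
      refine ⟨l, hlN, fun i hi => ?_, hz.2⟩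
      by_cases hia : i = a
      · subst hia; rw [Function.update_self]; exact ⟨hl1, hl2⟩
      · rw [Function.update_of_ne hia]; exact hz.1 i (by simp [hia, hi])
    have hPDclosed : ∀ m, IsClosed (PD m) := by
      intro m
      refine (isClosed_dom N k (insert a Fr) j).union ?_
      exact (Finset.range m).finite_toSet.isClosed_biUnion
        (fun l _ => isClosed_box N (Function.update k a l) Fr j)
    have hun : ∀ (mm : ℕ), PD mm ∪ Box N (Function.update k a mm) Fr j = PD (mm + 1) := by
      intro mm
      ext z
      simp only [hPDdef, Set.mem_union, Set.mem_iUnion, Finset.mem_range, exists_prop]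
      constructor
      · rintro ((hD | ⟨l, hl, hzl⟩) | hB)
        · exact Or.inl hD
        · exact Or.inr ⟨l, Nat.lt_succ_of_lt hl, hzl⟩
        · exact Or.inr ⟨mm, Nat.lt_succ_self mm, hB⟩
      · rintro (hD | ⟨l, hl, hzl⟩)
        · exact Or.inl (Or.inl hD)
        · rcases Nat.lt_succ_iff_lt_or_eq.1 hl with h | h
          · exact Or.inl (Or.inr ⟨l, h, hzl⟩)
          · subst h; exact Or.inr hzl
    have main : ∀ m, m ≤ N → ∃ gm, ContinuousOn gm (PD m) ∧
        (∀ z ∈ PD m, p (gm z) = H z) ∧ EqOn gm g (Dom N k (insert a Fr) j) := by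
      intro m
      induction m with
      | zero =>
        intro _
        have hPD0 : PD 0 = Dom N k (insert a Fr) j := by
          rw [hPDdef]; simp
        exact ⟨g, by rw [hPD0]; exact hg, by rw [hPD0]; exact hgp, fun z _ => rfl⟩
      | succ m ihm =>
        intro hmN
        obtain ⟨gm, hgmc, hgmp, hgme⟩ := ihm (Nat.le_of_succ_le hmN)
        have hk' : ∀ i, i ∉ Fr → Function.update k a m i < N := by
          intro i hi
          by_cases hia : i = a
          · subst hia; rw [Function.update_self]; exact Nat.lt_of_succ_le hmN
          · rw [Function.update_of_ne hia]; exact hk i (by simp [hia, hi])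
        have hsub : Dom N (Function.update k a m) Fr j ⊆ PD m := by
          rw [← hID1 m]; exact Set.inter_subset_left
        obtain ⟨q, hqc, hqp, hqe⟩ := ih (Function.update k a m) hk' j gm
          (hgmc.mono hsub) (fun z hz => hgmp z (hsub hz))
        refine ⟨fun z => if z ∈ PD m then gm z else q z, ?_, ?_, ?_⟩
        · have hglue := glue_continuousOn (hPDclosed m)
            (isClosed_box N (Function.update k a m) Fr j) hgmc hqc
            (by rw [hID1 m]; exact fun z hz => (hqe hz).symm)
          rwa [hun m] at hglue
        · intro z hz
          by_cases hzPD : z ∈ PD m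
          · simp only [if_pos hzPD]; exact hgmp z hzPD
          · simp only [if_neg hzPD]
            refine hqp z ?_
            rw [← hun m] at hz
            rcases hz with h | h
            · exact absurd h hzPD
            · exact h
        · intro z hz
          have hzPD : z ∈ PD m := Set.subset_union_left hz
          simp only [if_pos hzPD]
          exact hgme hz
    obtain ⟨gN, hgNc, hgNp, hgNe⟩ := main N le_rfl
    exact ⟨gN, hgNc.mono hID2, fun z hz => hgNp z (hID2 hz), hgNe⟩

end SerreAux

namespace SerreAux
open unitInterval Set

open Classical in
theorem isSerreFibration_of_locTriv {E B F : Type*} [TopologicalSpace E]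
    [TopologicalSpace B] [TopologicalSpace F] (p : E → B)
    (hp : ∀ b : B, ∃ U : Set B, IsOpen U ∧ b ∈ U ∧
      ∃ h : (p ⁻¹' U) ≃ₜ ↑U × F, ∀ x : p ⁻¹' U, ((h x).1 : B) = p (x : E)) :
    IsSerreFibration p := by
  intro n H h₀ hinit
  choose U hUopen hUmem htriv hprop using hp
  obtain ⟨δ, hδ, hball⟩ := lebesgue_number_lemma_of_metric (isCompact_univ)
    (fun b => (hUopen b).preimage H.continuous)
    (fun z _ => Set.mem_iUnion.2 ⟨H z, hUmem (H z)⟩)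
  obtain ⟨M, hM⟩ := exists_nat_one_div_lt hδ
  set N := M + 1 with hNdef
  have hN : 0 < N := Nat.succ_pos M
  have hN' : (0:ℝ) < N := by exact_mod_cast hN
  have hMN : 1/(N:ℝ) < δ := by
    have : ((N:ℝ)) = (M:ℝ) + 1 := by rw [hNdef]; push_cast; ring
    rw [this]; exact hM
  have hcellsmall : ∀ (k : Fin n → ℕ) (j : ℕ) (z w : (Fin n → I) × I),
      z ∈ Box N k ∅ j → w ∈ Box N k ∅ j → dist z w ≤ 1/(N:ℝ) := by
    intro k j z w hz hw
    have h1N : (0:ℝ) ≤ 1/(N:ℝ) := by positivity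
    rw [Prod.dist_eq]
    have e1 : ∀ m : ℕ, gr N (m + 1) = gr N m + 1/(N:ℝ) := fun m => gr_add_one hN
    refine max_le ?_ ?_
    · rw [dist_pi_le_iff h1N]
      intro i
      have hzi := hz.1 i (by simp)
      have hwi := hw.1 i (by simp)
      rw [Subtype.dist_eq, Real.dist_eq, abs_sub_le_iff]
      rw [e1 (k i)] at hzi hwi
      constructor <;> linarith [hzi.1, hzi.2, hwi.1, hwi.2]
    · have hzt := hz.2
      have hwt := hw.2
      rw [Subtype.dist_eq, Real.dist_eq, abs_sub_le_iff]
      rw [e1 j] at hzt hwt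
      constructor <;> linarith [hzt.1, hzt.2, hwt.1, hwt.2]
  have hloc : ∀ (k : Fin n → ℕ) (j : ℕ), (∀ i, k i < N) → (Box N k ∅ j).Nonempty →
      ∃ UU : Set B, (∃ h : (p ⁻¹' UU) ≃ₜ ↑UU × F,
        ∀ x : p ⁻¹' UU, ((h x).1 : B) = p (x : E)) ∧
        MapsTo H (Box N k ∅ j) UU := by
    intro k j _ hne
    obtain ⟨z₀, hz₀⟩ := hne
    obtain ⟨b, hb⟩ := hball z₀ (Set.mem_univ _)
    refine ⟨U b, ⟨htriv b, hprop b⟩, fun z hz => ?_⟩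
    have hdist : dist z z₀ < δ := lt_of_le_of_lt (hcellsmall k j z z₀ hz hz₀) hMN
    exact hb (Metric.mem_ball.2 hdist)
  -- iterate over time slabs
  set T : ℕ → Set ((Fin n → I) × I) := fun j => {z | (z.2 : ℝ) ≤ gr N j} with hTdef
  have hTclosed : ∀ j, IsClosed (T j) := fun j => isClosed_le cont_time continuous_const
  have main : ∀ j, ∃ gj : (Fin n → I) × I → E, ContinuousOn gj (T j) ∧
      (∀ z ∈ T j, p (gj z) = H z) ∧ (∀ v, gj (v, 0) = h₀ v) := by
    intro j
    induction j with
    | zero =>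
      refine ⟨fun z => h₀ z.1, (h₀.continuous.comp continuous_fst).continuousOn,
        ?_, fun v => rfl⟩
      intro z hz
      have hz0 : z.2 = 0 := by
        apply Subtype.ext
        have h1 : (z.2 : ℝ) ≤ 0 := by
          have := hz
          simp only [hTdef, Set.mem_setOf_eq] at this
          simpa [gr] using this
        exact le_antisymm h1 z.2.2.1
      have hzeq : z = (z.1, (0 : I)) := by
        rw [← hz0]
      rw [hzeq, hinit z.1]
    | succ j ihj =>
      obtain ⟨gj, hgjc, hgjp, hgj0⟩ := ihj
      have hvac : ∀ (i : Fin n), i ∉ (Finset.univ : Finset (Fin n)) → (fun _ => 0 : Fin n → ℕ) i < N :=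
        fun i hi => absurd (Finset.mem_univ i) hi
      have hDomEq : T j ∩ Box N (fun _ => 0) Finset.univ j = Dom N (fun _ => 0) Finset.univ j := by
        ext z
        constructor
        · rintro ⟨hT, hB⟩
          refine ⟨hB, Or.inl ?_⟩
          exact le_antisymm hT hB.2.1
        · rintro ⟨hB, hc⟩
          refine ⟨?_, hB⟩
          rcases hc with hb | ⟨i, hi, -⟩
          · exact le_of_eq hb
          · exact absurd (Finset.mem_univ i) hi
      have hDomT : Dom N (fun _ => 0) Finset.univ j ⊆ T j := by
        rw [← hDomEq]; exact Set.inter_subset_left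
      obtain ⟨q, hqc, hqp, hqe⟩ := box_lift p hN H H.continuous hloc Finset.univ
        (fun _ => 0) hvac j gj (hgjc.mono hDomT) (fun z hz => hgjp z (hDomT hz))
      have hun : T j ∪ Box N (fun _ => 0) Finset.univ j = T (j + 1) := by
        ext z
        simp only [hTdef, Set.mem_union, Set.mem_setOf_eq]
        constructor
        · rintro (h | h)
          · exact le_trans h (gr_mono (Nat.le_succ j))
          · exact h.2.2
        · intro h
          rcases le_total ((z.2 : ℝ)) (gr N j) with h' | h'
          · exact Or.inl h'
          · exact Or.inr ⟨fun i hi => absurd (Finset.mem_univ i) hi, h', h⟩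
      refine ⟨fun z => if z ∈ T j then gj z else q z, ?_, ?_, ?_⟩
      · have hglue := glue_continuousOn (hTclosed j)
          (isClosed_box N (fun _ => 0) Finset.univ j) hgjc hqc
          (by rw [hDomEq]; exact fun z hz => (hqe hz).symm)
        rwa [hun] at hglue
      · intro z hz
        by_cases hzT : z ∈ T j
        · simp only [if_pos hzT]; exact hgjp z hzT
        · simp only [if_neg hzT]
          refine hqp z ?_
          rw [← hun] at hz
          rcases hz with h | h
          · exact absurd h hzT
          · exact h
      · intro v
        have hv : ((v, (0:I)) : (Fin n → I) × I) ∈ T j := by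
          simp only [hTdef, Set.mem_setOf_eq]
          exact le_trans (by norm_num) (gr_nonneg (N := N) (m := j))
        simp only [if_pos hv]
        exact hgj0 v
  obtain ⟨gN, hgNc, hgNp, hgN0⟩ := main N
  have hTN : T N = Set.univ := by
    apply Set.eq_univ_of_forall
    intro z
    simp only [hTdef, Set.mem_setOf_eq, gr_self hN]
    exact z.2.2.2
  refine ⟨⟨gN, ?_⟩, hgN0, fun z => hgNp z (by rw [hTN]; trivial)⟩
  rw [← continuousOn_univ, ← hTN]
  exact hgNc

end SerreAux

namespace SerreAux
open unitInterval Set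

/-- Composition of Serre fibrations. -/
lemma isSerreFibration_comp {X Y Z : Type*} [TopologicalSpace X] [TopologicalSpace Y]
    [TopologicalSpace Z] {f : Y → Z} {g : X → Y} (hf : IsSerreFibration f)
    (hg : IsSerreFibration g) (hgc : Continuous g) :
    IsSerreFibration (fun x => f (g x)) := by
  intro n H h₀ hinit
  obtain ⟨H₁, hH₁0, hH₁⟩ := hf n H ⟨fun v => g (h₀ v), hgc.comp h₀.continuous⟩ hinit
  obtain ⟨H₂, hH₂0, hH₂⟩ := hg n H₁ h₀ (fun v => (hH₁0 v).symm)
  refine ⟨H₂, hH₂0, fun z => ?_⟩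
  show f (g (H₂ z)) = H z
  rw [hH₂ z]
  exact hH₁ z

/-- Any map from a cube lifts along a surjective Serre fibration. -/
lemma lift_cube {X Y : Type*} [TopologicalSpace X] [TopologicalSpace Y]
    {f : X → Y} (hf : IsSerreFibration f) (hsurj : Function.Surjective f)
    (n : ℕ) (g : C(Fin n → I, Y)) :
    ∃ g' : (Fin n → I) → X, Continuous g' ∧ ∀ v, f (g' v) = g v := by
  have hmem : ∀ (z : (Fin n → I) × I) (i : Fin n), (z.2 : ℝ) * (z.1 i : ℝ) ∈ I :=
    fun z i => unitInterval.mul_mem z.2.2 (z.1 i).2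
  set C : C((Fin n → I) × I, Y) :=
    ⟨fun z => g (fun i => ⟨(z.2 : ℝ) * (z.1 i : ℝ), hmem z i⟩),
      g.continuous.comp (continuous_pi fun i =>
        Continuous.subtype_mk (cont_time.mul (cont_coord i)) _)⟩ with hC
  obtain ⟨e, he⟩ := hsurj (g (fun i => ⟨(0:ℝ) * ((0:I) : ℝ), by norm_num⟩))
  have hinit : ∀ v : Fin n → I, f ((⟨fun _ => e, continuous_const⟩ : C(Fin n → I, X)) v)
      = C (v, 0) := by
    intro v
    show f e = g (fun i => ⟨(((0:I)) : ℝ) * (v i : ℝ), hmem (v, 0) i⟩)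
    rw [he]
    apply congrArg
    funext i
    apply Subtype.ext
    show (0:ℝ) * ((0:I):ℝ) = ((0:I):ℝ) * (v i : ℝ)
    norm_num
  obtain ⟨H', hH'0, hH'⟩ := hf n C ⟨fun _ => e, continuous_const⟩ hinit
  refine ⟨fun v => H' (v, 1), H'.continuous.comp (Continuous.prodMk continuous_id continuous_const), fun v => ?_⟩
  rw [hH' (v, 1)]
  show g (fun i => ⟨(((1:I)) : ℝ) * (v i : ℝ), hmem (v, 1) i⟩) = g v
  apply congrArg
  funext i
  apply Subtype.ext
  show ((1:I):ℝ) * (v i : ℝ) = (v i : ℝ)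
  norm_num

end SerreAux


open SerreAux

/-- Let `φ : G₀ → G₁` be a homomorphism of topological groups which is also a Serre
fibration, let `Eᵢ → Eᵢ/Gᵢ` be principal `Gᵢ`-bundles and let `ψ : E₀ → E₁` be a
`φ`-equivariant Serre fibration. Then the induced map `E₀/G₀ → E₁/G₁`
is a Serre fibration. -/
theorem isSerreFibration_quotMap
    {G₀ G₁ E₀ E₁ : Type*} [Group G₀] [Group G₁]
    [TopologicalSpace G₀] [TopologicalSpace G₁] [IsTopologicalGroup G₀] [IsTopologicalGroup G₁]
    [TopologicalSpace E₀] [TopologicalSpace E₁]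
    [MulAction G₀ E₀] [MulAction G₁ E₁] [ContinuousSMul G₀ E₀] [ContinuousSMul G₁ E₁]
    (φ : G₀ →* G₁) (hφ_cont : Continuous φ) (hφ : IsSerreFibration φ)
    (hE₀ : IsPrincipalGBundle G₀ E₀) (hE₁ : IsPrincipalGBundle G₁ E₁)
    (ψ : E₀ → E₁) (hψ_cont : Continuous ψ) (hψ : IsSerreFibration ψ)
    (hψ_equiv : ∀ (g : G₀) (x : E₀), ψ (g • x) = φ g • ψ x) :
    IsSerreFibration (quotMap φ ψ hψ_equiv) := by
  have hp₀ : IsSerreFibration (Quotient.mk (MulAction.orbitRel G₀ E₀)) := by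
    apply isSerreFibration_of_locTriv (F := G₀)
    intro b
    obtain ⟨U, hUo, hUb, h, hprop, -⟩ := hE₀ b
    exact ⟨U, hUo, hUb, h, hprop⟩
  have hp₁ : IsSerreFibration (Quotient.mk (MulAction.orbitRel G₁ E₁)) := by
    apply isSerreFibration_of_locTriv (F := G₁)
    intro b
    obtain ⟨U, hUo, hUb, h, hprop, -⟩ := hE₁ b
    exact ⟨U, hUo, hUb, h, hprop⟩
  have hcomp : IsSerreFibration
      (fun x : E₀ => Quotient.mk (MulAction.orbitRel G₁ E₁) (ψ x)) :=
    isSerreFibration_comp hp₁ hψ hψ_cont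
  intro n H h₀ hinit
  obtain ⟨l₀, hl₀c, hl₀⟩ := lift_cube hp₀ (fun q => ⟨q.out, q.out_eq⟩) n h₀
  have hinit' : ∀ v, (fun x : E₀ => Quotient.mk (MulAction.orbitRel G₁ E₁) (ψ x)) (l₀ v)
      = H (v, 0) := by
    intro v
    show Quotient.mk (MulAction.orbitRel G₁ E₁) (ψ (l₀ v)) = H (v, 0)
    have : quotMap φ ψ hψ_equiv (Quotient.mk (MulAction.orbitRel G₀ E₀) (l₀ v))
        = Quotient.mk (MulAction.orbitRel G₁ E₁) (ψ (l₀ v)) := by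
      unfold quotMap
      rw [Quotient.map_mk]
    rw [← this, hl₀ v, hinit v]
  obtain ⟨Ht, hHt0, hHt⟩ := hcomp n H ⟨l₀, hl₀c⟩ hinit'
  refine ⟨⟨fun z => Quotient.mk (MulAction.orbitRel G₀ E₀) (Ht z),
    continuous_quotient_mk'.comp Ht.continuous⟩, ?_, ?_⟩
  · intro v
    show Quotient.mk (MulAction.orbitRel G₀ E₀) (Ht (v, 0)) = h₀ v
    rw [hHt0 v]
    exact hl₀ v
  · intro z
    show quotMap φ ψ hψ_equiv (Quotient.mk (MulAction.orbitRel G₀ E₀) (Ht z)) = H z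
    unfold quotMap
    rw [Quotient.map_mk]
    exact hHt z
end

section
/- If p : E → B is a Serre fibration with nonempty fibres and q : B → C is a map such that q ∘ p is a Serre fibration, then q is a Serre fibration. -/
open unitInterval

/-- If `p : E → B` is a Serre fibration with nonempty fibres and `q : B → C` is a
continuous map such that `q ∘ p` is a Serre fibration, then `q` is a Serre fibration. -/
theorem serreFibration_of_comp {E B C : Type*} [TopologicalSpace E] [TopologicalSpace B]
    [TopologicalSpace C] (p : E → B) (q : B → C)
    (hp_cont : Continuous p) (hq_cont : Continuous q)
    (hp : IsSerreFibration p)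
    (hfib : ∀ b : B, ∃ e : E, p e = b)
    (hqp : IsSerreFibration (q ∘ p)) :
    IsSerreFibration q := by
  intro n H h₀ hh₀
  -- Step 1: lift h₀ along p, using that the cube is contractible.
  obtain ⟨e, he⟩ := hfib (h₀ fun _ => 0)
  let G : C((Fin n → I) × I, B) :=
    ⟨fun z => h₀ fun i => z.2 * z.1 i, by
      apply h₀.continuous.comp
      refine continuous_pi fun i => ?_
      have : Continuous fun z : (Fin n → I) × I => ((z.2 : ℝ) * (z.1 i : ℝ)) := by fun_prop
      exact continuous_induced_rng.2 this⟩
  obtain ⟨G', hG'0, hG'p⟩ := hp n G (ContinuousMap.const _ e) (by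
    intro v
    simp only [ContinuousMap.const_apply, he, G, ContinuousMap.coe_mk]
    congr 1
    funext i
    exact (zero_mul (v i)).symm)
  let g : C(Fin n → I, E) :=
    ⟨fun v => G' (v, 1), G'.continuous.comp (by continuity)⟩
  have pg : ∀ v, p (g v) = h₀ v := by
    intro v
    show p (G' (v, 1)) = h₀ v
    rw [hG'p]
    show h₀ (fun i => 1 * v i) = h₀ v
    congr 1
    funext i
    exact one_mul (v i)
  -- Step 2: lift H against q ∘ p with initial condition g.
  obtain ⟨H', hH'0, hH'q⟩ := hqp n H g (by
    intro v
    show q (p (g v)) = H (v, 0)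
    rw [pg, hh₀])
  refine ⟨⟨fun z => p (H' z), hp_cont.comp H'.continuous⟩, ?_, ?_⟩
  · intro v
    show p (H' (v, 0)) = h₀ v
    rw [hH'0, pg]
  · intro z
    exact hH'q z
end

section
/- Let M₁ → M₂ → M₃ → M₄ be an exact sequence of commutative monoids (exact meaning the image of each map equals the preimage of the identity under the next). If M₁, M₃, and M₄ are groups, then M₂ is a group. -/
/-- Let `M₁ → M₂ → M₃ → M₄` be an exact sequence of commutative monoids (exactness
meaning that the image of each map equals the preimage of the identity under the next).
If `M₁`, `M₃` and `M₄` are groups (every element is invertible), then `M₂` is a group. -/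
theorem isGroup_of_exact_commMonoids
    {M₁ M₂ M₃ M₄ : Type*} [CommMonoid M₁] [CommMonoid M₂] [CommMonoid M₃] [CommMonoid M₄]
    (f : M₁ →* M₂) (g : M₂ →* M₃) (h : M₃ →* M₄)
    (hexact₂ : ∀ m : M₂, g m = 1 ↔ ∃ m' : M₁, f m' = m)
    (hexact₃ : ∀ m : M₃, h m = 1 ↔ ∃ m' : M₂, g m' = m)
    (hM₁ : ∀ a : M₁, ∃ b : M₁, a * b = 1)
    (hM₃ : ∀ a : M₃, ∃ b : M₃, a * b = 1)
    (hM₄ : ∀ a : M₄, ∃ b : M₄, a * b = 1) :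
    ∀ a : M₂, ∃ b : M₂, a * b = 1 := by
  intro a
  obtain ⟨c, hc⟩ := hM₃ (g a)
  have hhc : h c = 1 := by
    have h1 : h (g a) = 1 := (hexact₃ (g a)).mpr ⟨a, rfl⟩
    have := congrArg h hc
    rw [map_mul, h1, one_mul, map_one] at this
    exact this
  obtain ⟨b, hb⟩ := (hexact₃ c).mp hhc
  have hab : g (a * b) = 1 := by rw [map_mul, hb, hc]
  obtain ⟨m, hm⟩ := (hexact₂ (a * b)).mp hab
  obtain ⟨n, hn⟩ := hM₁ m
  refine ⟨b * f n, ?_⟩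
  rw [← mul_assoc, ← hm, ← map_mul, hn, map_one]
end

section
/- Let Ω be an uncountable set, X a finite-dimensional countable simplicial complex, and U¹, U², … a sequence of open covers of |X|, where Uⁱ = (U_{(i,s)})_{s ∈ Ω}. Then there exists a (locally finite) open cover O = (O_i)_{i ∈ ℕ} of |X| and a function φ = (φ₁, φ₂) : ℕ → ℕ × Ω such that (i) O_i ⊆ U_{φ(i)} for each i, and (ii) whenever O_i ∩ O_j ≠ ∅ with i ≠ j, one has φ₁(i) ≠ φ₁(j). -/
open Geometry Set
open Metric

set_option maxHeartbeats 2000000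

/-- Colored brick cover of a single simplex: a countable family of open sets of `E`,
colored with fewer than `2 ^ t.card` colors, covering the simplex, with same-colored
sets disjoint, and each nonempty set contained in a `δ`-ball around a point of the simplex. -/
lemma brick_lemma {E : Type*} [NormedAddCommGroup E] [NormedSpace ℝ E]
    (t : Finset E) (ht : t.Nonempty) (hind : AffineIndependent ℝ ((↑) : t → E))
    {δ : ℝ} (hδ : 0 < δ) :
    ∃ (G : ℕ → Set E) (c : ℕ → ℕ),
      (∀ k, IsOpen (G k)) ∧
      (∀ k, c k < 2 ^ t.card) ∧
      (∀ k, (G k).Nonempty → ∃ p ∈ convexHull ℝ (t : Set E), G k ⊆ Metric.ball p δ) ∧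
      (∀ k k', k ≠ k' → c k = c k' → G k ∩ G k' = ∅) ∧
      convexHull ℝ (t : Set E) ⊆ ⋃ k, G k := by
  classical
  obtain ⟨v0, hv0⟩ := ht
  set i0 : ↥t := ⟨v0, hv0⟩ with hi0def
  set S := convexHull ℝ (t : Set E) with hSdef
  let ι := {x : ↥t // x ≠ i0}
  let w : ι → E := fun j => (↑↑j : E) - v0
  have li : LinearIndependent ℝ w := by
    have := (affineIndependent_iff_linearIndependent_vsub ℝ ((↑) : ↥t → E) i0).mp hind
    simpa [w, vsub_eq_sub] using this
  -- dual functionals, extended to all of `E` by Hahn–Banach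
  have hFex : ∀ j : ι, ∃ F : E →L[ℝ] ℝ, ∀ i : ι, F (w i) = if i = j then 1 else 0 := by
    intro j
    have hfd : FiniteDimensional ℝ (Submodule.span ℝ (Set.range w)) :=
      FiniteDimensional.span_of_finite ℝ (Set.finite_range w)
    let b : Module.Basis ι ℝ (Submodule.span ℝ (Set.range w)) := Module.Basis.span li
    let f0 : (Submodule.span ℝ (Set.range w)) →L[ℝ] ℝ :=
      LinearMap.toContinuousLinearMap (b.coord j)
    obtain ⟨F, hF, -⟩ := exists_extension_norm_eq (Submodule.span ℝ (Set.range w)) f0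
    refine ⟨F, fun i => ?_⟩
    have hmem : w i ∈ Submodule.span ℝ (Set.range w) := Submodule.subset_span ⟨i, rfl⟩
    have hbi : (⟨w i, hmem⟩ : Submodule.span ℝ (Set.range w)) = b i := by
      apply Subtype.ext
      simp [b, Module.Basis.span_apply]
    have := hF ⟨w i, hmem⟩
    rw [this, hbi]
    show (b.coord j) (b i) = _
    rw [Module.Basis.coord_apply, Module.Basis.repr_self, Finsupp.single_apply]
  choose F hF using hFex
  -- coordinate functions
  let φf : ι → E → ℝ := fun j y => F j (y - v0)
  have hφcont : ∀ j, Continuous (φf j) :=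
    fun j => (F j).continuous.comp (continuous_id.sub continuous_const)
  -- reconstruction of points of the simplex from coordinates
  have hrep : ∀ p ∈ S, p - v0 = ∑ j : ι, φf j p • w j := by
    intro p hp
    rw [hSdef, Finset.convexHull_eq] at hp
    obtain ⟨wt, hwt0, hwt1, hwtp⟩ := hp
    rw [Finset.centerMass_eq_of_sum_1 _ _ hwt1] at hwtp
    have h1 : p - v0 = ∑ y ∈ t, wt y • (y - v0) := by
      simp only [smul_sub]
      rw [Finset.sum_sub_distrib, ← Finset.sum_smul, hwt1, one_smul, ← hwtp]
      simp
    have h2 : ∀ j : ι, φf j p = wt ↑↑j := by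
      intro j
      have hφ : φf j p = ∑ y ∈ t, wt y * F j (y - v0) := by
        show F j (p - v0) = _
        rw [h1, map_sum]
        simp only [map_smul, smul_eq_mul]
      rw [hφ, ← Finset.sum_coe_sort t (fun y => wt y * F j (y - v0))]
      rw [Fintype.sum_eq_single (↑j : ↥t)]
      · have : F j (w j) = 1 := by rw [hF j j]; simp
        have hwj : ((↑(↑j : ↥t) : E) - v0) = w j := rfl
        rw [hwj, this, mul_one]
      · intro i hi
        by_cases hii : i = i0
        · subst hii
          have : ((↑i0 : E) - v0) = 0 := by simp [hi0def]
          rw [this, map_zero, mul_zero]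
        · have : F j (w ⟨i, hii⟩) = 0 := by
            rw [hF j ⟨i, hii⟩]
            have : (⟨i, hii⟩ : ι) ≠ j := by
              intro hc
              apply hi
              rw [← hc]
          
            simp [this]
          have hwi : ((↑i : E) - v0) = w ⟨i, hii⟩ := rfl
          rw [hwi, this, mul_zero]
    have h3 : ∑ j : ι, φf j p • w j = ∑ j : ι, wt ↑↑j • w j := by
      apply Finset.sum_congr rfl
      intro j _
      rw [h2 j]
    rw [h3]
    have h4 : ∑ i ∈ (Finset.univ : Finset ↥t).erase i0, wt ↑i • ((↑i : E) - v0)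
        = ∑ j : ι, wt ↑↑j • w j :=
      Finset.sum_subtype ((Finset.univ : Finset ↥t).erase i0)
        (by intro x; simp [Finset.mem_erase]) (fun i => wt ↑i • ((↑i : E) - v0))
    have h5 : wt ↑i0 • ((↑i0 : E) - v0) + ∑ i ∈ (Finset.univ : Finset ↥t).erase i0,
        wt ↑i • ((↑i : E) - v0) = ∑ i : ↥t, wt ↑i • ((↑i : E) - v0) :=
      Finset.add_sum_erase Finset.univ (fun i : ↥t => wt ↑i • ((↑i : E) - v0))
        (Finset.mem_univ i0)
    have h6 : wt ↑i0 • ((↑i0 : E) - v0) = 0 := by simp [hi0def]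
    have h7 : ∑ i : ↥t, wt ↑i • ((↑i : E) - v0) = ∑ y ∈ t, wt y • (y - v0) :=
      Finset.sum_coe_sort t (fun y => wt y • (y - v0))
    rw [h1, ← h7, ← h5, h6, zero_add, h4]
  -- distance estimate from coordinate differences
  have hdiff : ∀ p ∈ S, ∀ q ∈ S, ‖p - q‖ ≤ ∑ j : ι, |φf j p - φf j q| * ‖w j‖ := by
    intro p hp q hq
    have : p - q = ∑ j : ι, (φf j p - φf j q) • w j := by
      have h1 := hrep p hp
      have h2 := hrep q hq
      have : p - q = (p - v0) - (q - v0) := by abel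
      rw [this, h1, h2, ← Finset.sum_sub_distrib]
      apply Finset.sum_congr rfl
      intro j _
      rw [sub_smul]
    rw [this]
    refine (norm_sum_le _ _).trans ?_
    apply Finset.sum_le_sum
    intro j _
    rw [norm_smul, Real.norm_eq_abs]
  -- constants
  set B : ℝ := ∑ j : ι, ‖F j‖ * ‖w j‖ with hBdef
  set W : ℝ := ∑ j : ι, ‖w j‖ with hWdef
  have hB0 : 0 ≤ B := Finset.sum_nonneg fun j _ => mul_nonneg (norm_nonneg _) (norm_nonneg _)
  have hW0 : 0 ≤ W := Finset.sum_nonneg fun j _ => norm_nonneg _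
  set L : ℝ := δ / (4 * (W + 1)) with hLdef
  have hL : 0 < L := div_pos hδ (by linarith)
  set ε : ℝ := min (δ / 4) (δ / (16 * (B + 1))) with hεdef
  have hε : 0 < ε := lt_min (by linarith) (div_pos hδ (by linarith))
  have hε4 : ε ≤ δ / 4 := min_le_left _ _
  have hεB : ε * (B + 1) ≤ δ / 16 := by
    have h1 : ε ≤ δ / (16 * (B + 1)) := min_le_right _ _
    have h2 : (0:ℝ) < B + 1 := by linarith
    calc ε * (B + 1) ≤ (δ / (16 * (B + 1))) * (B + 1) :=
          mul_le_mul_of_nonneg_right h1 h2.le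
      _ = δ / 16 := by
          have : (B:ℝ) + 1 ≠ 0 := by linarith
          field_simp
  have hLW : L * (W + 1) = δ / 4 := by
    have : (W:ℝ) + 1 ≠ 0 := by linarith
    rw [hLdef]; field_simp
  -- the bricks
  let C : (ι → ℤ) → Set E := fun z =>
    {y | ∀ j, φf j y ∈ Ioo ((z j : ℝ) * L - L/4) ((z j : ℝ) * L + L + L/4)} ∩ thickening ε S
  have hCopen : ∀ z, IsOpen (C z) := by
    intro z
    apply IsOpen.inter _ isOpen_thickening
    have : {y | ∀ j, φf j y ∈ Ioo ((z j : ℝ) * L - L/4) ((z j : ℝ) * L + L + L/4)}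
        = ⋂ j, (φf j) ⁻¹' Ioo ((z j : ℝ) * L - L/4) ((z j : ℝ) * L + L + L/4) := by
      ext y; simp [mem_iInter]
    rw [this]
    exact isOpen_iInter_of_finite fun j => (isOpen_Ioo).preimage (hφcont j)
  -- same-parity distinct bricks are disjoint
  have hCdisj : ∀ z z' : ι → ℤ, z ≠ z' → (∀ j, z j % 2 = z' j % 2) → C z ∩ C z' = ∅ := by
    intro z z' hne hpar
    have : ∃ j, z j ≠ z' j := by
      by_contra h
      push_neg at h
      exact hne (funext h)
    obtain ⟨j, hj⟩ := this
    have hdvd : (2:ℤ) ∣ z j - z' j := by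
      have := hpar j
      omega
    have habs : z' j + 2 ≤ z j ∨ z j + 2 ≤ z' j := by omega
    ext y
    simp only [mem_inter_iff, mem_empty_iff_false, iff_false]
    rintro ⟨⟨hy1, -⟩, ⟨hy2, -⟩⟩
    have b1 := hy1 j
    have b2 := hy2 j
    simp only [mem_Ioo] at b1 b2
    rcases habs with h | h
    · have hc : ((z' j : ℝ) + 2) ≤ (z j : ℝ) := by exact_mod_cast h
      have : ((z' j : ℝ) + 2) * L ≤ (z j : ℝ) * L := mul_le_mul_of_nonneg_right hc hL.le
      nlinarith [b1.1, b2.2]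
    · have hc : ((z j : ℝ) + 2) ≤ (z' j : ℝ) := by exact_mod_cast h
      have : ((z j : ℝ) + 2) * L ≤ (z' j : ℝ) * L := mul_le_mul_of_nonneg_right hc hL.le
      nlinarith [b2.1, b1.2]
  -- each nonempty brick is contained in a small ball around a point of `S`
  have hCsmall : ∀ z : ι → ℤ, (C z).Nonempty → ∃ p ∈ S, C z ⊆ ball p δ := by
    intro z ⟨y₀, hy₀I, hy₀T⟩
    obtain ⟨p₀, hp₀S, hp₀d⟩ := mem_thickening_iff.mp hy₀T
    refine ⟨p₀, hp₀S, ?_⟩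
    rintro y ⟨hyI, hyT⟩
    obtain ⟨p, hpS, hpd⟩ := mem_thickening_iff.mp hyT
    -- coordinate bound
    have hkey : ∀ j : ι, |φf j p - φf j p₀| ≤ 3*L/2 + 2*(‖F j‖*ε) := by
      intro j
      have e1 : φf j p - φf j y = F j (p - y) := by
        show F j (p - v0) - F j (y - v0) = _
        rw [← map_sub]
        congr 1
        abel
      have e2 : φf j p₀ - φf j y₀ = F j (p₀ - y₀) := by
        show F j (p₀ - v0) - F j (y₀ - v0) = _
        rw [← map_sub]
        congr 1
        abel
      have n1 : |φf j p - φf j y| ≤ ‖F j‖ * ε := by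
        rw [e1, ← Real.norm_eq_abs]
        refine ((F j).le_opNorm _).trans ?_
        apply mul_le_mul_of_nonneg_left _ (norm_nonneg _)
        rw [← dist_eq_norm, dist_comm]
        exact hpd.le
      have n2 : |φf j p₀ - φf j y₀| ≤ ‖F j‖ * ε := by
        rw [e2, ← Real.norm_eq_abs]
        refine ((F j).le_opNorm _).trans ?_
        apply mul_le_mul_of_nonneg_left _ (norm_nonneg _)
        rw [← dist_eq_norm, dist_comm]
        exact hp₀d.le
      have b1 := hyI j
      have b2 := hy₀I j
      simp only [mem_Ioo] at b1 b2
      rw [abs_le] at n1 n2 ⊢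
      constructor <;> linarith [n1.1, n1.2, n2.1, n2.2, b1.1, b1.2, b2.1, b2.2]
    have hpp₀ : ‖p - p₀‖ ≤ 3*L/2 * W + 2*ε*B := by
      refine (hdiff p hpS p₀ hp₀S).trans ?_
      have : ∀ j : ι, |φf j p - φf j p₀| * ‖w j‖
          ≤ 3*L/2 * ‖w j‖ + 2*ε*(‖F j‖ * ‖w j‖) := by
        intro j
        have := mul_le_mul_of_nonneg_right (hkey j) (norm_nonneg (w j))
        refine this.trans (le_of_eq (by ring))
      refine (Finset.sum_le_sum fun j _ => this j).trans ?_
      rw [Finset.sum_add_distrib, ← Finset.mul_sum, ← Finset.mul_sum, ← hWdef, ← hBdef]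
    have hnum : 3*L/2 * W + 2*ε*B ≤ δ / 2 := by
      have h1 : L * W ≤ δ / 4 := by nlinarith [hLW, hL.le]
      have h2 : ε * B ≤ δ / 16 := by nlinarith [hεB, hε.le]
      linarith
    have htri : dist y p₀ ≤ dist y p + dist p p₀ := dist_triangle _ _ _
    rw [mem_ball]
    have hd2 : dist p p₀ = ‖p - p₀‖ := dist_eq_norm _ _
    linarith [hpd, hpp₀, hε4, htri]
  -- covering
  have hCcover : ∀ x ∈ S, x ∈ C (fun j => ⌊φf j x / L⌋) := by
    intro x hx
    constructor
    · intro j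
      set a : ℤ := ⌊φf j x / L⌋ with ha
      have h1 : (a : ℝ) ≤ φf j x / L := Int.floor_le _
      have h2 : φf j x / L < a + 1 := Int.lt_floor_add_one _
      have h3 : (a:ℝ) * L ≤ φf j x := (le_div_iff₀ hL).mp h1
      have h4 : φf j x < ((a:ℝ) + 1) * L := (div_lt_iff₀ hL).mp h2
      constructor <;> nlinarith [h3, h4, hL]
    · exact self_subset_thickening hε S hx
  -- assemble
  letI : Encodable ι := Fintype.toEncodable ι
  letI : Encodable (ι → ℤ) := inferInstance
  let pc : (ι → ℤ) → ℕ := fun z =>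
    ((Fintype.equivFin (ι → Bool)) (fun j => decide (z j % 2 = 0))).val
  refine ⟨fun k => (Encodable.decode₂ (ι → ℤ) k).elim ∅ C,
          fun k => (Encodable.decode₂ (ι → ℤ) k).elim 0 pc, ?_, ?_, ?_, ?_, ?_⟩
  · intro k
    rcases h : Encodable.decode₂ (ι → ℤ) k with - | z
    · simp [h]
    · simpa [h] using hCopen z
  · intro k
    have hcard : Fintype.card (ι → Bool) = 2 ^ Fintype.card ι := by
      rw [Fintype.card_fun, Fintype.card_bool]
    have hle : Fintype.card ι ≤ t.card := by
      have h := Fintype.card_subtype_le (fun x : ↥t => x ≠ i0)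
      rwa [Fintype.card_coe] at h
    have hpow : 2 ^ Fintype.card ι ≤ 2 ^ t.card := Nat.pow_le_pow_right (by norm_num) hle
    rcases h : Encodable.decode₂ (ι → ℤ) k with - | z
    · simpa [h] using Nat.pos_of_ne_zero (by positivity)
    · simp only [h, Option.elim]
      calc pc z < Fintype.card (ι → Bool) := (Fintype.equivFin (ι → Bool) _).isLt
        _ = 2 ^ Fintype.card ι := hcard
        _ ≤ 2 ^ t.card := hpow
  · intro k hne
    rcases h : Encodable.decode₂ (ι → ℤ) k with - | z
    · simp only [h, Option.elim] at hne
      exact absurd hne (by simp)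
    · simp only [h, Option.elim] at hne ⊢
      exact hCsmall z hne
  · intro k k' hkk hcc
    rcases h : Encodable.decode₂ (ι → ℤ) k with - | z
    · simp [h]
    rcases h' : Encodable.decode₂ (ι → ℤ) k' with - | z'
    · simp [h']
    simp only [h, h', Option.elim] at hcc ⊢
    have hzz : z ≠ z' := by
      rintro rfl
      exact hkk ((Encodable.mem_decode₂.mp h).symm.trans (Encodable.mem_decode₂.mp h'))
    apply hCdisj z z' hzz
    intro j
    have : (fun j => decide (z j % 2 = 0)) = (fun j => decide (z' j % 2 = 0)) :=
      (Fintype.equivFin (ι → Bool)).injective (Fin.ext hcc)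
    have := congrFun this j
    simp only [decide_eq_decide] at this
    have h2 := Int.emod_two_eq (z j)
    have h3 := Int.emod_two_eq (z' j)
    omega
  · intro x hx
    refine mem_iUnion.mpr ⟨Encodable.encode (fun j => ⌊φf j x / L⌋), ?_⟩
    rw [Encodable.decode₂_encode]
    exact hCcover x hx

/-- Let `Ω` be an uncountable set, `K` a countable simplicial complex of finite dimension,
and `U¹, U², …` a sequence of open covers of the realisation `|K|`, each indexed by `Ω`.
Then there is a locally finite open cover `O = (O_i)_{i ∈ ℕ}` of `|K|` and a function
`φ = (φ₁, φ₂) : ℕ → ℕ × Ω` such that `O_i ⊆ U_{φ(i)}` for each `i`, and whenever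
`O_i ∩ O_j ≠ ∅` with `i ≠ j` one has `φ₁ i ≠ φ₁ j`. -/
theorem covering_lemma {E : Type*} [NormedAddCommGroup E] [NormedSpace ℝ E]
    (K : SimplicialComplex ℝ E)
    (hcount : K.faces.Countable)
    (hfindim : ∃ d : ℕ, ∀ s ∈ K.faces, s.card ≤ d + 1)
    (Ω : Type*) [Uncountable Ω]
    (U : ℕ → Ω → Set K.space)
    (hUopen : ∀ i s, IsOpen (U i s))
    (hUcover : ∀ i : ℕ, (⋃ s : Ω, U i s) = univ) :
    ∃ (O : ℕ → Set K.space) (φ : ℕ → ℕ × Ω),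
      (∀ i, IsOpen (O i)) ∧
      (⋃ i : ℕ, O i) = univ ∧
      LocallyFinite O ∧
      (∀ i, O i ⊆ U (φ i).1 (φ i).2) ∧
      (∀ i j, i ≠ j → (O i ∩ O j).Nonempty → (φ i).1 ≠ (φ j).1) := by
  classical
  obtain (hX | hX) := isEmpty_or_nonempty K.space
  · -- the empty complex : everything is trivial
    have hs₀ : Nonempty Ω := by
      by_contra h
      rw [not_nonempty_iff] at h
      exact not_countable (α := Ω) inferInstance
    obtain ⟨s₀⟩ := hs₀
    refine ⟨fun _ => ∅, fun _ => (0, s₀), fun _ => isOpen_empty, ?_, ?_, ?_, ?_⟩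
    · have : (univ : Set K.space) = ∅ := Set.eq_empty_of_isEmpty _
      simp [this]
    · exact fun x => ⟨univ, Filter.univ_mem, by simp⟩
    · exact fun i => empty_subset _
    · rintro i j hij ⟨x, hx, -⟩
      exact absurd hx (by simp)
  obtain ⟨x₀⟩ := hX
  have hfaces : K.faces.Nonempty := by
    have hx := x₀.2
    rw [SimplicialComplex.mem_space_iff] at hx
    obtain ⟨s, hs, -⟩ := hx
    exact ⟨s, hs⟩
  obtain ⟨T, hT⟩ := hcount.exists_eq_range hfaces
  have hTface : ∀ n, T n ∈ K.faces := fun n => by rw [hT]; exact mem_range_self n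
  have hTne : ∀ n, (T n).Nonempty := fun n => Finset.nonempty_iff_ne_empty.mpr
    (fun h => K.empty_notMem (h ▸ hTface n))
  have hTind : ∀ n, AffineIndependent ℝ ((↑) : (T n) → E) := fun n => K.indep (hTface n)
  obtain ⟨s₀, -⟩ : ∃ s : Ω, x₀ ∈ U 0 s := by
    have : x₀ ∈ ⋃ s, U 0 s := by rw [hUcover 0]; trivial
    simpa using this
  -- Lebesgue numbers for the finitely many covers associated with each face
  have hleb : ∀ n r : ℕ, ∃ δ > 0,
      ∀ x ∈ (Subtype.val ⁻¹' (convexHull ℝ ((T n : Set E))) : Set K.space),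
      ∃ s : Ω, Metric.ball x δ ⊆ U (Nat.pair n r) s := by
    intro n r
    have hcomp : IsCompact (Subtype.val ⁻¹' (convexHull ℝ ((T n : Set E))) : Set K.space) := by
      rw [Topology.IsEmbedding.subtypeVal.isCompact_iff]
      have himg : Subtype.val '' (Subtype.val ⁻¹' (convexHull ℝ ((T n : Set E))) : Set K.space)
          = convexHull ℝ ((T n : Set E)) := by
        rw [Set.image_preimage_eq_inter_range, Subtype.range_coe]
        exact inter_eq_left.mpr (K.convexHull_subset_space (hTface n))
      rw [himg]
      exact ((T n).finite_toSet).isCompact_convexHull ℝ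
    exact lebesgue_number_lemma_of_metric hcomp (fun s => hUopen _ s)
      (by rw [hUcover (Nat.pair n r)]; exact subset_univ _)
  choose δf hδpos hδball using hleb
  set δm : ℕ → ℝ := fun n => (Finset.range (2 ^ (T n).card)).inf'
    ⟨0, Finset.mem_range.mpr (by positivity)⟩ (δf n) with hδm
  have hδmpos : ∀ n, 0 < δm n := fun n =>
    (Finset.lt_inf'_iff _).mpr (fun r _ => hδpos n r)
  have hδmle : ∀ n r, r < 2 ^ (T n).card → δm n ≤ δf n r := fun n r hr =>
    Finset.inf'_le _ (Finset.mem_range.mpr hr)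
  -- colored bricks for each face
  have hbrick := fun n => brick_lemma (T n) (hTne n) (hTind n) (hδmpos n)
  choose G c hGopen hcb hGsmall hGdisj hGcover using hbrick
  -- choose a member of the appropriate cover containing each brick
  have hselex : ∀ n k, ∃ s : Ω,
      (Subtype.val ⁻¹' (G n k) : Set K.space) ⊆ U (Nat.pair n (c n k)) s := by
    intro n k
    by_cases hne : (G n k).Nonempty
    · obtain ⟨p, hpS, hsub⟩ := hGsmall n k hne
      have hpX : p ∈ K.space := K.convexHull_subset_space (hTface n) hpS
      obtain ⟨s, hs⟩ := hδball n (c n k) ⟨p, hpX⟩ hpS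
      refine ⟨s, fun y hy => ?_⟩
      apply hs
      rw [Metric.mem_ball, Subtype.dist_eq]
      have hyb : (y : E) ∈ Metric.ball p (δm n) := hsub hy
      rw [Metric.mem_ball] at hyb
      exact lt_of_lt_of_le hyb (hδmle n (c n k) (hcb n k))
    · rw [Set.not_nonempty_iff_eq_empty] at hne
      exact ⟨s₀, by simp [hne]⟩
  choose sel hsel using hselex
  -- the full countable colored cover
  set O0 : ℕ → Set K.space := fun i =>
    (Subtype.val ⁻¹' (G i.unpair.1 i.unpair.2) : Set K.space) with hO0
  have hO0open : ∀ i, IsOpen (O0 i) := fun i =>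
    (hGopen _ _).preimage continuous_subtype_val
  have hO0cover : (⋃ i, O0 i) = univ := by
    rw [eq_univ_iff_forall]
    intro x
    have hx := x.2
    rw [SimplicialComplex.mem_space_iff] at hx
    obtain ⟨s, hs, hxs⟩ := hx
    rw [hT] at hs
    obtain ⟨n, rfl⟩ := hs
    obtain ⟨k, hk⟩ := mem_iUnion.mp (hGcover n hxs)
    refine mem_iUnion.mpr ⟨Nat.pair n k, ?_⟩
    have hunp : (Nat.pair n k).unpair = (n, k) := Nat.unpair_pair n k
    simp only [hO0, hunp]
    exact hk
  -- make it locally finite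
  obtain ⟨V, hVopen, hVcover, hVlf, hVsub⟩ := precise_refinement O0 hO0open hO0cover
  refine ⟨V, fun i => (Nat.pair i.unpair.1 (c i.unpair.1 i.unpair.2),
      sel i.unpair.1 i.unpair.2), hVopen, hVcover, hVlf, ?_, ?_⟩
  · intro i
    exact (hVsub i).trans (hsel _ _)
  · rintro i j hij ⟨x, hxi, hxj⟩ hφ
    simp only at hφ
    obtain ⟨hn, hc⟩ := Nat.pair_eq_pair.mp hφ
    have hk : i.unpair.2 ≠ j.unpair.2 := by
      intro hk
      apply hij
      rw [← Nat.pair_unpair i, ← Nat.pair_unpair j, hn, hk]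
    have hc' : c i.unpair.1 i.unpair.2 = c i.unpair.1 j.unpair.2 := by rw [hc, hn]
    have hdisj := hGdisj i.unpair.1 i.unpair.2 j.unpair.2 hk hc'
    have hxGi : (x : E) ∈ G i.unpair.1 i.unpair.2 := hVsub i hxi
    have hxGj : (x : E) ∈ G i.unpair.1 j.unpair.2 := by
      have h := hVsub j hxj
      rw [hO0] at h
      simp only at h
      rw [hn]
      exact h
    have : (x : E) ∈ G i.unpair.1 i.unpair.2 ∩ G i.unpair.1 j.unpair.2 := ⟨hxGi, hxGj⟩
    rw [hdisj] at this
    exact this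
end
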